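/- If (α, β) is uniform with density 2/π² on {0 < α, 0 < β, α + β < π}, then (h, k) = (cot(α/2), cot(β/2)) has joint density (8/π²)·1/((h²+1)(k²+1)) on the region {h > 0, k > 0, hk > 1}. -/

import Mathlib

open MeasureTheory

private lemma det_aux10 (a b : ℝ) :
    (((1:ℝ→L[ℝ]ℝ).smulRight a).prodMap ((1:ℝ→L[ℝ]ℝ).smulRight b)).det = a * b := by
  rw [ContinuousLinearMap.det, ← LinearMap.det_toMatrix (Module.Basis.finTwoProd ℝ),
    Matrix.det_fin_two]
  simp [LinearMap.toMatrix_apply, Module.Basis.finTwoProd_zero, Module.Basis.finTwoProd_one,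
    Module.Basis.coe_finTwoProd_repr]

private lemma deriv_aux10 {t : ℝ} (ht : Real.sin (t/2) ≠ 0) :
    HasDerivAt (fun t : ℝ => Real.cot (t/2)) (-(1/(2 * Real.sin (t/2)^2))) t := by
  have h2 : HasDerivAt (fun t : ℝ => t/2) (1/2) t := (hasDerivAt_id t).div_const 2
  have hcos : HasDerivAt (fun t : ℝ => Real.cos (t/2)) (-Real.sin (t/2) * (1/2)) t :=
    by have := (Real.hasDerivAt_cos (t/2)).comp t h2; exact this
  have hsin : HasDerivAt (fun t : ℝ => Real.sin (t/2)) (Real.cos (t/2) * (1/2)) t :=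
    by have := (Real.hasDerivAt_sin (t/2)).comp t h2; exact this
  have this : HasDerivAt (fun t : ℝ => Real.cos (t/2) / Real.sin (t/2)) _ t := hcos.div hsin ht
  have heq : (fun t : ℝ => Real.cos (t/2) / Real.sin (t/2)) = fun t : ℝ => Real.cot (t/2) := by
    funext t; rw [Real.cot_eq_cos_div_sin]
  rw [heq] at this
  convert this using 1
  have hpy := Real.sin_sq_add_cos_sq (t/2)
  field_simp
  nlinarith [hpy]

private lemma strictAnti_aux10 : StrictAntiOn (fun t : ℝ => Real.cot (t/2)) (Set.Ioo 0 Real.pi) := by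
  have hd : ∀ t ∈ Set.Ioo (0:ℝ) Real.pi,
      HasDerivAt (fun t : ℝ => Real.cot (t/2)) (-(1/(2 * Real.sin (t/2)^2))) t := by
    intro t ht
    have hs : Real.sin (t/2) ≠ 0 :=
      ne_of_gt (Real.sin_pos_of_pos_of_lt_pi (by linarith [ht.1]) (by linarith [ht.2, Real.pi_pos]))
    exact deriv_aux10 hs
  apply strictAntiOn_of_deriv_neg (convex_Ioo 0 Real.pi)
  · exact fun t ht => (hd t ht).differentiableAt.continuousAt.continuousWithinAt
  · intro t ht
    rw [interior_Ioo] at ht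
    rw [(hd t ht).deriv]
    have hs : (0:ℝ) < Real.sin (t/2) :=
      Real.sin_pos_of_pos_of_lt_pi (by linarith [ht.1]) (by linarith [ht.2, Real.pi_pos])
    have hp : (0:ℝ) < 1/(2 * Real.sin (t/2)^2) := by positivity
    linarith

private lemma cot_arctan_inv10 {x : ℝ} (hx : 0 < x) : Real.cot (Real.arctan x⁻¹) = x := by
  rw [Real.cot_eq_cos_div_sin, Real.cos_arctan, Real.sin_arctan]
  have hs : (0:ℝ) < Real.sqrt (1 + x⁻¹^2) := Real.sqrt_pos.mpr (by positivity)
  field_simp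

private lemma image_aux10 :
    (fun p : ℝ × ℝ => (Real.cot (p.1/2), Real.cot (p.2/2))) ''
      {p : ℝ × ℝ | 0 < p.1 ∧ 0 < p.2 ∧ p.1 + p.2 < Real.pi} =
      {q : ℝ × ℝ | 0 < q.1 ∧ 0 < q.2 ∧ 1 < q.1 * q.2} := by
  ext q
  constructor
  · rintro ⟨p, ⟨h1, h2, h3⟩, rfl⟩
    have pi_pos := Real.pi_pos
    have ha1 : (0:ℝ) < p.1/2 := by linarith
    have ha2 : p.1/2 < Real.pi/2 := by linarith
    have hb1 : (0:ℝ) < p.2/2 := by linarith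
    have hb2 : p.2/2 < Real.pi/2 := by linarith
    have hsa : (0:ℝ) < Real.sin (p.1/2) := Real.sin_pos_of_pos_of_lt_pi ha1 (by linarith)
    have hsb : (0:ℝ) < Real.sin (p.2/2) := Real.sin_pos_of_pos_of_lt_pi hb1 (by linarith)
    have hca : (0:ℝ) < Real.cos (p.1/2) := Real.cos_pos_of_mem_Ioo ⟨by linarith, ha2⟩
    have hcb : (0:ℝ) < Real.cos (p.2/2) := Real.cos_pos_of_mem_Ioo ⟨by linarith, hb2⟩
    have hcs : (0:ℝ) < Real.cos (p.1/2 + p.2/2) :=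
      Real.cos_pos_of_mem_Ioo ⟨by linarith, by linarith⟩
    rw [Real.cos_add] at hcs
    refine ⟨by simp [Real.cot_eq_cos_div_sin]; positivity,
            by simp [Real.cot_eq_cos_div_sin]; positivity, ?_⟩
    simp only [Real.cot_eq_cos_div_sin]
    rw [div_mul_div_comm, lt_div_iff₀ (by positivity), one_mul]
    nlinarith
  · rintro ⟨h1, h2, h3⟩
    refine ⟨(2 * Real.arctan q.1⁻¹, 2 * Real.arctan q.2⁻¹), ⟨?_, ?_, ?_⟩, ?_⟩
    · have := Real.arctan_zero ▸ Real.arctan_strictMono (by positivity : (0:ℝ) < q.1⁻¹); linarith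
    · have := Real.arctan_zero ▸ Real.arctan_strictMono (by positivity : (0:ℝ) < q.2⁻¹); linarith
    · have : Real.arctan q.1⁻¹ + Real.arctan q.2⁻¹ < Real.pi/2 := by
        apply Real.arctan_add_arctan_lt_pi_div_two
        rw [← mul_inv]
        exact inv_lt_one_of_one_lt₀ h3
      linarith
    · rw [Prod.ext_iff]
      constructor
      · show Real.cot (2 * Real.arctan q.1⁻¹ / 2) = q.1
        rw [show 2 * Real.arctan q.1⁻¹ / 2 = Real.arctan q.1⁻¹ by ring]
        exact cot_arctan_inv10 h1
      · show Real.cot (2 * Real.arctan q.2⁻¹ / 2) = q.2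
        rw [show 2 * Real.arctan q.2⁻¹ / 2 = Real.arctan q.2⁻¹ by ring]
        exact cot_arctan_inv10 h2

theorem stmt_10 :
    Measure.map (fun p : ℝ × ℝ => (Real.cot (p.1 / 2), Real.cot (p.2 / 2)))
      ((volume : Measure (ℝ × ℝ)).withDensity fun p =>
        ENNReal.ofReal (if 0 < p.1 ∧ 0 < p.2 ∧ p.1 + p.2 < Real.pi
          then 2 / Real.pi ^ 2 else 0)) =
      (volume : Measure (ℝ × ℝ)).withDensity fun q =>
        ENNReal.ofReal (if 0 < q.1 ∧ 0 < q.2 ∧ 1 < q.1 * q.2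
          then (8 / Real.pi ^ 2) * (1 / (q.1 ^ 2 + 1)) * (1 / (q.2 ^ 2 + 1))
          else 0) := by
  have pi_pos := Real.pi_pos
  set f : ℝ × ℝ → ℝ × ℝ := fun p => (Real.cot (p.1 / 2), Real.cot (p.2 / 2)) with hfdef
  set S : Set (ℝ × ℝ) := {p | 0 < p.1 ∧ 0 < p.2 ∧ p.1 + p.2 < Real.pi} with hSdef
  set T : Set (ℝ × ℝ) := {q | 0 < q.1 ∧ 0 < q.2 ∧ 1 < q.1 * q.2} with hTdef
  have hmcot : Measurable (fun t : ℝ => Real.cot (t/2)) := by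
    have he : (fun t : ℝ => Real.cot (t/2)) = fun t => Real.cos (t/2) / Real.sin (t/2) := by
      funext t; rw [Real.cot_eq_cos_div_sin]
    rw [he]
    exact (Real.measurable_cos.comp (measurable_id.div_const 2)).div
      (Real.measurable_sin.comp (measurable_id.div_const 2))
  have hf : Measurable f := (hmcot.comp measurable_fst).prodMk (hmcot.comp measurable_snd)
  have hS : MeasurableSet S :=
    (measurableSet_lt measurable_const measurable_fst).inter
      ((measurableSet_lt measurable_const measurable_snd).inter
        (measurableSet_lt (measurable_fst.add measurable_snd) measurable_const))
  have hT : MeasurableSet T :=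
    (measurableSet_lt measurable_const measurable_fst).inter
      ((measurableSet_lt measurable_const measurable_snd).inter
        (measurableSet_lt measurable_const (measurable_fst.mul measurable_snd)))
  -- membership in S gives both coordinates in (0, π)
  have hmemS : ∀ x : ℝ × ℝ, x ∈ S →
      x.1 ∈ Set.Ioo (0:ℝ) Real.pi ∧ x.2 ∈ Set.Ioo (0:ℝ) Real.pi := by
    rintro x ⟨h1, h2, h3⟩
    exact ⟨⟨h1, by linarith⟩, ⟨h2, by linarith⟩⟩
  have hinjS : Set.InjOn f S := by
    intro p hp p' hp' he
    have h1 := hmemS p hp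
    have h2 := hmemS p' hp'
    have e1 : Real.cot (p.1/2) = Real.cot (p'.1/2) := congrArg Prod.fst he
    have e2 : Real.cot (p.2/2) = Real.cot (p'.2/2) := congrArg Prod.snd he
    exact Prod.ext (strictAnti_aux10.injOn h1.1 h2.1 e1) (strictAnti_aux10.injOn h1.2 h2.2 e2)
  ext A hA
  rw [Measure.map_apply hf hA, withDensity_apply _ (hf hA), withDensity_apply _ hA]
  -- the Jacobian data
  set c : ℝ → ℝ := fun t => -(1/(2 * Real.sin (t/2)^2)) with hcdef
  set F : ℝ × ℝ → (ℝ × ℝ) →L[ℝ] (ℝ × ℝ) := fun x =>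
    (((1:ℝ→L[ℝ]ℝ).smulRight (c x.1)).prodMap ((1:ℝ→L[ℝ]ℝ).smulRight (c x.2))) with hFdef
  set s : Set (ℝ × ℝ) := S ∩ f ⁻¹' A with hsdef
  have hs : MeasurableSet s := hS.inter (hf hA)
  have hFs : ∀ x ∈ s, HasFDerivWithinAt f (F x) s x := by
    intro x hx
    obtain ⟨hx1, hx2⟩ := hmemS x hx.1
    have hs1 : Real.sin (x.1/2) ≠ 0 :=
      ne_of_gt (Real.sin_pos_of_pos_of_lt_pi (by linarith [hx1.1]) (by linarith [hx1.2]))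
    have hs2 : Real.sin (x.2/2) ≠ 0 :=
      ne_of_gt (Real.sin_pos_of_pos_of_lt_pi (by linarith [hx2.1]) (by linarith [hx2.2]))
    have d1 := (deriv_aux10 hs1).hasFDerivAt
    have d2 := (deriv_aux10 hs2).hasFDerivAt
    exact (HasFDerivAt.prodMap x d1 d2).hasFDerivWithinAt
  have hinj : Set.InjOn f s := hinjS.mono Set.inter_subset_left
  -- LHS as integral over s
  have e1 : (∫⁻ p in f ⁻¹' A, ENNReal.ofReal
        (if 0 < p.1 ∧ 0 < p.2 ∧ p.1 + p.2 < Real.pi then 2 / Real.pi ^ 2 else 0)) =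
      ∫⁻ p in s, ENNReal.ofReal (2 / Real.pi ^ 2) := by
    rw [hsdef, ← setLIntegral_indicator hS]
    refine setLIntegral_congr_fun (hf hA) (fun p _ => ?_)
    rw [Set.indicator_apply]
    by_cases h : p ∈ S
    · have h' : 0 < p.1 ∧ 0 < p.2 ∧ p.1 + p.2 < Real.pi := h
      rw [if_pos h, if_pos h']
    · have h' : ¬(0 < p.1 ∧ 0 < p.2 ∧ p.1 + p.2 < Real.pi) := h
      rw [if_neg h, if_neg h', ENNReal.ofReal_zero]
  -- RHS as integral over A ∩ T = f '' s
  have e2 : (∫⁻ q in A, ENNReal.ofReal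
        (if 0 < q.1 ∧ 0 < q.2 ∧ 1 < q.1 * q.2
          then (8 / Real.pi ^ 2) * (1 / (q.1 ^ 2 + 1)) * (1 / (q.2 ^ 2 + 1)) else 0)) =
      ∫⁻ q in T ∩ A, ENNReal.ofReal
        ((8 / Real.pi ^ 2) * (1 / (q.1 ^ 2 + 1)) * (1 / (q.2 ^ 2 + 1))) := by
    rw [← setLIntegral_indicator hT]
    refine setLIntegral_congr_fun hA (fun q _ => ?_)
    rw [Set.indicator_apply]
    by_cases h : q ∈ T
    · have h' : 0 < q.1 ∧ 0 < q.2 ∧ 1 < q.1 * q.2 := h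
      rw [if_pos h, if_pos h']
    · have h' : ¬(0 < q.1 ∧ 0 < q.2 ∧ 1 < q.1 * q.2) := h
      rw [if_neg h, if_neg h', ENNReal.ofReal_zero]
  have himg : f '' s = T ∩ A := by
    rw [hsdef, Set.image_inter_preimage, image_aux10]
  rw [e1, e2, ← himg,
    lintegral_image_eq_lintegral_abs_det_fderiv_mul volume hs hFs hinj]
  refine setLIntegral_congr_fun hs (fun x hx => ?_)
  obtain ⟨hx1, hx2⟩ := hmemS x hx.1
  have hs1 : (0:ℝ) < Real.sin (x.1/2) :=
    Real.sin_pos_of_pos_of_lt_pi (by linarith [hx1.1]) (by linarith [hx1.2])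
  have hs2 : (0:ℝ) < Real.sin (x.2/2) :=
    Real.sin_pos_of_pos_of_lt_pi (by linarith [hx2.1]) (by linarith [hx2.2])
  have hdet : (F x).det = c x.1 * c x.2 := det_aux10 _ _
  have hc1 : Real.cot (x.1/2) ^ 2 + 1 = 1 / Real.sin (x.1/2) ^ 2 := by
    rw [Real.cot_eq_cos_div_sin, div_pow]
    field_simp
    linarith [Real.sin_sq_add_cos_sq (x.1/2)]
  have hc2 : Real.cot (x.2/2) ^ 2 + 1 = 1 / Real.sin (x.2/2) ^ 2 := by
    rw [Real.cot_eq_cos_div_sin, div_pow]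
    field_simp
    linarith [Real.sin_sq_add_cos_sq (x.2/2)]
  have hval : f x = (Real.cot (x.1/2), Real.cot (x.2/2)) := rfl
  rw [hdet, hval, ← ENNReal.ofReal_mul (abs_nonneg _)]
  congr 1
  have hprod : c x.1 * c x.2 = (1/(2 * Real.sin (x.1/2)^2)) * (1/(2 * Real.sin (x.2/2)^2)) := by
    simp only [hcdef]; ring
  have habs : |c x.1 * c x.2| = (1/(2 * Real.sin (x.1/2)^2)) * (1/(2 * Real.sin (x.2/2)^2)) := by
    rw [hprod]; exact abs_of_pos (by positivity)
  rw [habs]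
  simp only []
  rw [hc1, hc2]
  have hπ : Real.pi ≠ 0 := ne_of_gt pi_pos
  field_simp
  ring
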